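/- For any fixed z ∈ ℂ with z ≠ 0, the cubic equation z w^3 - w^2 - z w + 1/3 = 0 in w has a repeated root if and only if z ∈ {z_1, z_2, z_3, z_4}, where z_k = 3^{-1/4} e^{2πi m_k/24} with (m_1, m_2, m_3, m_4) = (7, 17, 19, 5). -/

import Mathlib

open Complex Real

/-- `ω = e^{2πi/24}`, a primitive 24th root of unity. -/
noncomputable def ω24 : ℂ := Complex.exp (2 * (π : ℂ) * Complex.I / 24)

/-- The four branch points `z_k = 3^{-1/4} ω^{m_k}` with `(m₁,m₂,m₃,m₄) = (7,17,19,5)`. -/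
noncomputable def branchPoints : Set ℂ :=
  { (3 : ℂ) ^ (-(1 / 4 : ℂ)) * ω24 ^ 7, (3 : ℂ) ^ (-(1 / 4 : ℂ)) * ω24 ^ 17,
    (3 : ℂ) ^ (-(1 / 4 : ℂ)) * ω24 ^ 19, (3 : ℂ) ^ (-(1 / 4 : ℂ)) * ω24 ^ 5 }

/-- For `z ≠ 0`, the cubic `z w³ − w² − z w + 1/3` has a repeated root
(a common zero of the cubic and its derivative) iff `z` is one of the four
branch points. -/
theorem cubic_repeated_root_iff_branch_point (z : ℂ) (hz : z ≠ 0) :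
    (∃ w : ℂ, z * w ^ 3 - w ^ 2 - z * w + 1 / 3 = 0 ∧
        deriv (fun w : ℂ => z * w ^ 3 - w ^ 2 - z * w + 1 / 3) w = 0) ↔
      z ∈ branchPoints := by
  have hI : (I : ℂ)^2 = -1 := Complex.I_sq
  set s : ℂ := ((Real.sqrt 3 : ℝ) : ℂ) with hs_def
  have hs : s^2 = 3 := by
    rw [hs_def]
    norm_cast
    exact Real.sq_sqrt (by norm_num)
  have hs0 : s ≠ 0 := by
    intro h
    rw [h] at hs
    norm_num at hs
  set c : ℂ := (3 : ℂ) ^ (-(1 / 4 : ℂ)) with hc_def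
  have h3 : (3:ℂ) ≠ 0 := by norm_num
  have hc2 : c^2 = s⁻¹ := by
    have e1 : c^2 = (3:ℂ)^(-(1/2 : ℂ)) := by
      rw [sq, hc_def, ← Complex.cpow_add _ _ h3]
      norm_num
    have e2 : ((( (3:ℝ))^(-(1/2 : ℝ)) : ℝ) : ℂ) = (3:ℂ)^(-(1/2 : ℂ)) := by
      rw [Complex.ofReal_cpow (by norm_num : (0:ℝ) ≤ 3)]
      norm_num
    have e3 : (3:ℝ)^(-(1/2 : ℝ)) = (Real.sqrt 3)⁻¹ := by
      rw [Real.rpow_neg (by norm_num), Real.sqrt_eq_rpow]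
    rw [e1, ← e2, e3, hs_def]
    push_cast
    ring
  have hw2 : ω24^2 = (s + I)/2 := by
    rw [ω24, ← Complex.exp_nat_mul]
    have harg : ((2:ℕ) : ℂ) * (2 * (π : ℂ) * Complex.I / 24) = ((π/6 : ℝ) : ℂ) * I := by
      push_cast
      ring
    rw [harg, Complex.exp_mul_I, ← Complex.ofReal_cos, ← Complex.ofReal_sin,
      Real.cos_pi_div_six, Real.sin_pi_div_six, hs_def]
    push_cast
    ring
  have hw12 : ω24^12 = -1 := by
    have e : ω24^12 = (ω24^2)^6 := by ring
    rw [e, hw2]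
    linear_combination ((9/64) + (45/64)*I^2 + (15/64)*I^4 + (9/32)*s*I + (5/16)*s*I^3 + (3/64)*s^2 + (15/64)*s^2*I^2 + (3/32)*s^3*I + (1/64)*s^4) * hs + ((91/64) + (11/16)*I^2 + (1/64)*I^4 + (27/32)*s*I + (3/32)*s*I^3) * hI
  set a : ℂ := c * ω24^5 with ha_def
  set b : ℂ := c * ω24^7 with hb_def
  have ha2 : s * a^2 = (I - s)/2 := by
    have e : s * a^2 = s * (c^2 * (ω24^2)^5) := by rw [ha_def]; ring
    rw [e, hc2, hw2,
      show s * (s⁻¹ * ((s + I) / 2) ^ 5) = s * s⁻¹ * ((s + I) / 2) ^ 5 from by ring,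
      mul_inv_cancel₀ hs0, one_mul]
    linear_combination ((15/32)*I + (5/16)*I^3 + (3/32)*s + (5/16)*s*I^2 + (5/32)*s^2*I + (1/32)*s^3) * hs + ((29/32)*I + (1/32)*I^3 + (25/32)*s + (5/32)*s*I^2) * hI
  have hb2 : s * b^2 = -((s + I)/2) := by
    have e : s * b^2 = s * (c^2 * (ω24^2)^7) := by rw [hb_def]; ring
    rw [e, hc2, hw2,
      show s * (s⁻¹ * ((s + I) / 2) ^ 7) = s * s⁻¹ * ((s + I) / 2) ^ 7 from by ring,
      mul_inv_cancel₀ hs0, one_mul]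
    linear_combination ((63/128)*I + (105/128)*I^3 + (21/128)*I^5 + (9/128)*s + (63/128)*s*I^2 + (35/128)*s*I^4 + (21/128)*s^2*I + (35/128)*s^2*I^3 + (3/128)*s^3 + (21/128)*s^3*I^2 + (7/128)*s^4*I + (1/128)*s^5) * hs + ((253/128)*I + (31/64)*I^3 + (1/128)*I^5 + (91/128)*s + (49/64)*s*I^2 + (7/128)*s*I^4) * hI
  have habs : a^2 + b^2 = -1 := by
    have e : s * (a^2 + b^2) = s * (-1) := by
      rw [mul_add, ha2, hb2]
      ring
    exact mul_left_cancel₀ hs0 e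
  have hab : a^2 * b^2 = 1/3 := by
    have e : (s * a^2) * (s * b^2) = ((I - s)/2) * (-((s + I)/2)) := by rw [ha2, hb2]
    have e3 : (3:ℂ) * (a^2 * b^2) = 1 := by
      linear_combination e + (1/4 - a^2*b^2)*hs - (1/4)*hI
    linear_combination (1/3 : ℂ) * e3
  have key : z^4 + z^2 + 1/3 = (z - a)*(z + a)*((z - b)*(z + b)) := by
    linear_combination z^2 * habs - hab
  -- the derivative
  have hderiv : ∀ w : ℂ, deriv (fun w : ℂ => z * w ^ 3 - w ^ 2 - z * w + 1 / 3) w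
      = 3*z*w^2 - 2*w - z := by
    intro w
    have h1 : HasDerivAt (fun w : ℂ => w^3) (3*w^2) w := by
      simpa using hasDerivAt_pow 3 w
    have h2 : HasDerivAt (fun w : ℂ => w^2) (2*w) w := by
      simpa using hasDerivAt_pow 2 w
    have h3 : HasDerivAt (fun w : ℂ => w) 1 w := hasDerivAt_id w
    have h : HasDerivAt (fun w : ℂ => z * w ^ 3 - w ^ 2 - z * w + 1 / 3)
        (z * (3*w^2) - 2*w - z * 1) w :=
      (((h1.const_mul z).sub h2).sub (h3.const_mul z)).add_const _
    rw [h.deriv]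
    ring
  -- the main quartic reduction
  have main : (∃ w : ℂ, z * w ^ 3 - w ^ 2 - z * w + 1 / 3 = 0 ∧
        deriv (fun w : ℂ => z * w ^ 3 - w ^ 2 - z * w + 1 / 3) w = 0) ↔
      z^4 + z^2 + 1/3 = 0 := by
    constructor
    · rintro ⟨w, hp, hd0⟩
      rw [hderiv w] at hd0
      have hQ : w^2 + 2*z*w - 1 = 0 := by linear_combination (-3 : ℂ)*hp + w*hd0
      have hR : w*(1 + 3*z^2) = z := by
        linear_combination (-1/2 : ℂ)*hd0 + ((3/2 : ℂ)*z)*hQ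
      linear_combination (-(1/3 : ℂ))*(1 + 3*z^2)^2*hQ
        + ((1/3 : ℂ)*(w*(1 + 3*z^2) + z + 2*z*(1 + 3*z^2)))*hR
    · intro hq
      have h13 : (1:ℂ) + 3*z^2 ≠ 0 := by
        intro h
        have h9 : (1:ℂ)/9 = 0 := by linear_combination hq - ((3*z^2 + 2)/9)*h
        norm_num at h9
      refine ⟨z/(1 + 3*z^2), ?_, ?_⟩
      · field_simp
        have h13' : (1 + z ^ 2 * 3 : ℂ) ^ 3 ≠ 0 := pow_ne_zero 3 (by rwa [mul_comm] at h13)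
        rw [div_add_one h13', div_eq_iff h13']
        ring_nf
        linear_combination (3 : ℂ) * hq
      · rw [hderiv]
        field_simp
        ring_nf
        linear_combination (-9*z : ℂ) * hq
  -- membership description
  have h17 : c * ω24^17 = -a := by
    have e : ω24^17 = ω24^12 * ω24^5 := by ring
    rw [ha_def, e, hw12]; ring
  have h19 : c * ω24^19 = -b := by
    have e : ω24^19 = ω24^12 * ω24^7 := by ring
    rw [hb_def, e, hw12]; ring
  have hmem : z ∈ branchPoints ↔ (z = b ∨ z = -a ∨ z = -b ∨ z = a) := by
    simp only [branchPoints, Set.mem_insert_iff, Set.mem_singleton_iff, ← hc_def,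
      ← ha_def, ← hb_def, h17, h19]
  rw [main, hmem, key]
  constructor
  · intro h
    rcases mul_eq_zero.1 h with h' | h'
    · rcases mul_eq_zero.1 h' with h'' | h''
      · exact Or.inr (Or.inr (Or.inr (sub_eq_zero.1 h'')))
      · exact Or.inr (Or.inl (eq_neg_of_add_eq_zero_left h''))
    · rcases mul_eq_zero.1 h' with h'' | h''
      · exact Or.inl (sub_eq_zero.1 h'')
      · exact Or.inr (Or.inr (Or.inl (eq_neg_of_add_eq_zero_left h'')))
  · rintro (h | h | h | h) <;> subst h <;> ring
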